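/- Let j ≥ g ≥ 2 be integers and 0 < p < 1 with g·p ≥ 8. Then the probability that the Erdős–Rényi graph G(j, p) has no connected component on at least j − g/2 vertices is at most (1−p)^{j − g/2} + Σ_{g/2 ≤ m ≤ j/2} (2e·j·(1−p)^{j/2}/g)^m. -/

import Mathlib

open MeasureTheory Real
open scoped Classical ENNReal

/-- Uniform measure on `[0,1]`. -/
noncomputable def unitIv : Measure ℝ := volume.restrict (Set.Icc 0 1)

/-- Sample space for the Erdős–Rényi graph `G(n,p)`: an independent uniform `[0,1]`
label for each pair, used as the coin flip. -/
abbrev ErSpace (n : ℕ) := Fin n → Fin n → ℝ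

noncomputable def erMeasure (n : ℕ) : Measure (ErSpace n) :=
  Measure.pi fun _ => Measure.pi fun _ => unitIv

/-- The Erdős–Rényi graph `G(n,p)`: each pair is an edge independently with
probability `p`. -/
def erGraph (n : ℕ) (p : ℝ) (ω : ErSpace n) : SimpleGraph (Fin n) where
  Adj i j := i ≠ j ∧ ω (min i j) (max i j) ≤ p
  symm := ⟨by rintro i j ⟨h1, h2⟩; exact ⟨h1.symm, by rwa [min_comm, max_comm]⟩⟩
  loopless := ⟨by rintro i ⟨h1, -⟩; exact h1 rfl⟩

instance : IsProbabilityMeasure unitIv := by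
  constructor
  simp [unitIv, Real.volume_Icc]

lemma unitIv_Ioi {p : ℝ} (h0 : 0 ≤ p) (h1 : p ≤ 1) :
    unitIv (Set.Ioi p) = ENNReal.ofReal (1 - p) := by
  rw [unitIv, Measure.restrict_apply (measurableSet_Ioi)]
  have : Set.Ioi p ∩ Set.Icc 0 1 = Set.Ioc p 1 := by
    ext x
    simp only [Set.mem_inter_iff, Set.mem_Ioi, Set.mem_Icc, Set.mem_Ioc]
    constructor
    · rintro ⟨h, _, h2⟩; exact ⟨h, h2⟩
    · rintro ⟨h, h2⟩; exact ⟨h, le_trans h0 h.le, h2⟩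
  rw [this, Real.volume_Ioc]


def ncset (j : ℕ) (p : ℝ) (S : Finset (Fin j)) : Set (ErSpace j) :=
  {ω | ∀ i l : Fin j, i < l → ((i ∈ S) ↔ l ∉ S) → p < ω i l}

lemma ncset_eq_pi (j : ℕ) (p : ℝ) (S : Finset (Fin j)) :
    ncset j p S = Set.pi Set.univ (fun i => Set.pi Set.univ
      (fun l => if i < l ∧ ((i ∈ S) ↔ l ∉ S) then Set.Ioi p else Set.univ)) := by
  ext ω
  simp only [ncset, Set.mem_setOf_eq, Set.mem_pi, Set.mem_univ, forall_true_left]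
  constructor
  · intro h i l
    split_ifs with hc
    · exact h i l hc.1 hc.2
    · trivial
  · intro h i l h1 h2
    have := h i l
    rw [if_pos ⟨h1, h2⟩] at this
    exact this

lemma ncset_measure (j : ℕ) {p : ℝ} (hp : 0 ≤ p) (hp1 : p ≤ 1) (S : Finset (Fin j)) :
    erMeasure j (ncset j p S) = ENNReal.ofReal (1 - p) ^
      (((Finset.univ ×ˢ Finset.univ).filter
        (fun q : Fin j × Fin j => q.1 < q.2 ∧ ((q.1 ∈ S) ↔ q.2 ∉ S))).card) := by
  rw [ncset_eq_pi, erMeasure, Measure.pi_pi]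
  have : ∀ i : Fin j, (Measure.pi fun _ : Fin j => unitIv) (Set.pi Set.univ
      (fun l => if i < l ∧ ((i ∈ S) ↔ l ∉ S) then Set.Ioi p else Set.univ))
      = ∏ l : Fin j, (if i < l ∧ ((i ∈ S) ↔ l ∉ S) then ENNReal.ofReal (1-p) else 1) := by
    intro i
    rw [Measure.pi_pi]
    congr 1
    ext l
    split_ifs
    · exact unitIv_Ioi hp hp1
    · exact measure_univ
  simp_rw [this]
  rw [← Finset.prod_product']
  rw [Finset.prod_ite]
  simp [Finset.prod_const]

lemma cross_count (j : ℕ) (S : Finset (Fin j)) :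
    S.card * (j - S.card) ≤ ((Finset.univ ×ˢ Finset.univ).filter
        (fun q : Fin j × Fin j => q.1 < q.2 ∧ ((q.1 ∈ S) ↔ q.2 ∉ S))).card := by
  have hcard : (S ×ˢ Sᶜ).card = S.card * (j - S.card) := by
    rw [Finset.card_product, Finset.card_compl, Fintype.card_fin]
  rw [← hcard]
  apply Finset.card_le_card_of_injOn (fun q => (min q.1 q.2, max q.1 q.2))
  · rintro ⟨a, b⟩ hab
    rw [Finset.mem_coe, Finset.mem_product] at hab
    obtain ⟨ha, hb⟩ := hab
    rw [Finset.mem_compl] at hb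
    have hne : a ≠ b := fun h => hb (h ▸ ha)
    rw [Finset.mem_coe, Finset.mem_filter]
    dsimp only
    refine ⟨Finset.mem_product.2 ⟨Finset.mem_univ _, Finset.mem_univ _⟩, ?_, ?_⟩
    · exact min_lt_max.2 hne
    · rcases lt_or_gt_of_ne hne with h | h
      · rw [min_eq_left h.le, max_eq_right h.le]; simp [ha, hb]
      · rw [min_eq_right h.le, max_eq_left h.le]
        simp only [hb, ha]
        tauto
  · rintro ⟨a, b⟩ hab ⟨a', b'⟩ hab' heq
    simp only [Finset.coe_product, Set.mem_prod, Finset.mem_coe, Finset.mem_compl] at hab hab'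
    obtain ⟨ha, hb⟩ := hab
    obtain ⟨ha', hb'⟩ := hab'
    simp only [Prod.mk.injEq] at heq
    obtain ⟨h1, h2⟩ := heq
    have key : ({a, b} : Set (Fin j)) = {a', b'} := by
      have e1 : ∀ x y : Fin j, ({x, y} : Set (Fin j)) = {min x y, max x y} := by
        intro x y
        rcases le_total x y with h | h
        · rw [min_eq_left h, max_eq_right h]
        · rw [min_eq_right h, max_eq_left h, Set.pair_comm]
      rw [e1 a b, e1 a' b', h1, h2]
    have haa : a = a' := by
      have : a ∈ ({a', b'} : Set (Fin j)) := key ▸ (by simp)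
      rcases this with h | h
      · exact h
      · exact absurd (h ▸ ha) hb'
    have hbb : b = b' := by
      have : b ∈ ({a', b'} : Set (Fin j)) := key ▸ (by simp)
      rcases this with h | h
      · exact absurd (h ▸ ha') hb; 
      · exact h
    exact Prod.ext haa hbb

lemma ncset_measure_le (j : ℕ) {p : ℝ} (hp : 0 ≤ p) (hp1 : p ≤ 1) (S : Finset (Fin j)) :
    erMeasure j (ncset j p S) ≤ ENNReal.ofReal ((1 - p) ^ (S.card * (j - S.card))) := by
  rw [ncset_measure j hp hp1 S, ENNReal.ofReal_pow (by linarith)]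
  exact pow_le_pow_of_le_one (by positivity) (by simp [ENNReal.ofReal_le_one]; linarith)
    (cross_count j S)

section Covering

variable {j : ℕ} (G : SimpleGraph (Fin j))

def CompClosed (S : Finset (Fin j)) : Prop :=
  ∀ a ∈ S, ∀ b, G.connectedComponentMk b = G.connectedComponentMk a → b ∈ S

lemma compClosed_compl {S : Finset (Fin j)} (h : CompClosed G S) : CompClosed G Sᶜ := by
  intro a ha b hb
  rw [Finset.mem_compl] at ha ⊢
  intro hbS
  exact ha (h b hbS a hb.symm)

lemma compClosed_nocross {S : Finset (Fin j)} (h : CompClosed G S) :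
    ∀ a ∈ S, ∀ b, b ∉ S → ¬ G.Adj a b := by
  intro a ha b hb hadj
  exact hb (h a ha b (SimpleGraph.ConnectedComponent.sound hadj.symm.reachable))

lemma covering (C A : ℕ) (hA1 : 1 ≤ A) (hAj : A ≤ j) (hAC : 2 * A + C ≤ j + 1)
    (hbad : ∀ v : Fin j, (Finset.univ.filter
        (fun w => G.connectedComponentMk w = G.connectedComponentMk v)).card ≤ C) :
    ∃ S : Finset (Fin j), A ≤ S.card ∧ 2 * S.card ≤ j ∧
      ∀ a ∈ S, ∀ b, b ∉ S → ¬ G.Adj a b := by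
  have hex : ∃ n, A ≤ n ∧ ∃ S : Finset (Fin j), CompClosed G S ∧ S.card = n :=
    ⟨j, hAj, Finset.univ, fun a _ b _ => Finset.mem_univ b, by simp⟩
  set N := Nat.find hex with hN
  obtain ⟨hAN, S₀, hcl, hcard⟩ := Nat.find_spec hex
  have hNcard : S₀.card = N := hcard
  have hNj : S₀.card ≤ j := by
    simpa using Finset.card_le_card (Finset.subset_univ S₀)
  have hNle : N + A ≤ j := by
    by_contra hcon
    have hS₀ne : S₀.Nonempty := Finset.card_pos.mp (by omega)
    obtain ⟨a, ha⟩ := hS₀ne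
    set Fa := Finset.univ.filter
      (fun w => G.connectedComponentMk w = G.connectedComponentMk a) with hFa
    have hsub : Fa ⊆ S₀ := by
      intro w hw
      rw [hFa, Finset.mem_filter] at hw
      exact hcl a ha w hw.2
    have hFa1 : 1 ≤ Fa.card := by
      apply Finset.card_pos.mpr
      exact ⟨a, Finset.mem_filter.2 ⟨Finset.mem_univ a, rfl⟩⟩
    have hFaC : Fa.card ≤ C := hbad a
    have hcl' : CompClosed G (S₀ \ Fa) := by
      intro b hb w hw
      rw [Finset.mem_sdiff] at hb ⊢
      constructor
      · exact hcl b hb.1 w hw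
      · intro hwFa
        apply hb.2
        rw [hFa, Finset.mem_filter] at hwFa ⊢
        exact ⟨Finset.mem_univ b, hw ▸ hwFa.2⟩
    have hcard' : (S₀ \ Fa).card = N - Fa.card := by
      rw [Finset.card_sdiff_of_subset hsub, hNcard]
    have hQ : A ≤ N - Fa.card ∧ ∃ S : Finset (Fin j), CompClosed G S ∧ S.card = N - Fa.card := by
      refine ⟨by omega, S₀ \ Fa, hcl', hcard'⟩
    have := Nat.find_min' hex hQ
    omega
  by_cases h2 : 2 * N ≤ j
  · exact ⟨S₀, by omega, by omega, compClosed_nocross G hcl⟩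
  · refine ⟨S₀ᶜ, ?_, ?_, compClosed_nocross G (compClosed_compl G hcl)⟩
    · rw [Finset.card_compl, Fintype.card_fin, hNcard]; omega
    · rw [Finset.card_compl, Fintype.card_fin, hNcard]; omega

end Covering

lemma choose_le_real (n k : ℕ) (hk : 1 ≤ k) :
    (n.choose k : ℝ) ≤ (Real.exp 1 * n / k) ^ k := by
  have h1 : (n.choose k : ℝ) ≤ (n : ℝ) ^ k / (k.factorial : ℝ) := Nat.choose_le_pow_div k n
  refine h1.trans ?_
  have hkpos : (0:ℝ) < k := by exact_mod_cast hk
  have hfac : (0:ℝ) < (k.factorial : ℝ) := by exact_mod_cast k.factorial_pos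
  have h2 : ((k:ℝ)) ^ k / (k.factorial : ℝ) ≤ Real.exp k :=
    Real.pow_div_factorial_le_exp (x := (k:ℝ)) (by positivity) k
  have h3 : Real.exp (k : ℝ) = Real.exp 1 ^ k := by
    rw [← Real.exp_nat_mul]; simp
  rw [div_pow, mul_pow, div_le_div_iff₀ hfac (by positivity)]
  calc (n:ℝ)^k * (k:ℝ)^k ≤ (n:ℝ)^k * (Real.exp 1 ^ k * (k.factorial : ℝ)) := by
        apply mul_le_mul_of_nonneg_left _ (by positivity)
        rw [← h3]
        rw [div_le_iff₀ hfac] at h2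
        exact h2
    _ = Real.exp 1 ^ k * (n:ℝ)^k * (k.factorial:ℝ) := by ring

lemma g_ge_nine (g : ℕ) (p : ℝ) (hp1 : p < 1) (hp : 0 < p) (hgp : 8 ≤ (g:ℝ) * p) : 9 ≤ g := by
  by_contra h
  push_neg at h
  have hg8 : (g : ℝ) ≤ 8 := by exact_mod_cast (by omega : g ≤ 8)
  nlinarith

lemma exp_three_gt : (20:ℝ) ≤ Real.exp 3 := by
  have h := Real.exp_one_gt_d9
  have h3 : Real.exp 3 = (Real.exp 1)^3 := by
    rw [← Real.exp_nat_mul]; norm_num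
  rw [h3]
  nlinarith [h, sq_nonneg (Real.exp 1), Real.exp_pos 1]

lemma low_term (j g m : ℕ) (p : ℝ) (hp : 0 < p) (hp1 : p < 1) (hgp : 8 ≤ (g:ℝ) * p)
    (hm3 : 3 ≤ m) (hm4 : g ≤ 4 * m) (hmg : 2 * m < g) (hmj : 2 * m ≤ j) (hgj : g ≤ j) :
    (j.choose m : ℝ) * (1 - p) ^ (m * (j - m)) ≤
      (1 - p) ^ ((j : ℝ) - g / 2) * (Real.exp 4 * (1 / 5) ^ m) := by
  have hq0 : (0:ℝ) < 1 - p := by linarith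
  have hg9 : 9 ≤ g := g_ge_nine g p hp1 hp hgp
  have hgR : (9:ℝ) ≤ g := by exact_mod_cast hg9
  have hgjR : (g:ℝ) ≤ j := by exact_mod_cast hgj
  have hmR : (3:ℝ) ≤ m := by exact_mod_cast hm3
  have hm4R : (g:ℝ) ≤ 4 * m := by exact_mod_cast hm4
  have hmgR : 2 * (m:ℝ) < g := by exact_mod_cast hmg
  have hmjR : 2 * (m:ℝ) ≤ j := by exact_mod_cast hmj
  have hGg0 : (0:ℝ) < g := by linarith
  have hJ0 : (0:ℝ) < j := by linarith
  obtain ⟨u, hu⟩ : ∃ u : ℝ, u = (j:ℝ) / g := ⟨_, rfl⟩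
  have huG : u * g = j := by rw [hu]; exact div_mul_cancel₀ _ hGg0.ne'
  have hu1 : 1 ≤ u := by rw [hu]; exact (one_le_div hGg0).2 hgjR
  have hu0 : 0 ≤ u := by linarith
  have hM1 : (0:ℝ) ≤ (m:ℝ) - 1 := by linarith
  obtain ⟨D, hD⟩ : ∃ D : ℝ, D = (m:ℝ) * ((j:ℝ) - m) - ((j:ℝ) - (g:ℝ) / 2) := ⟨_, rfl⟩
  have hDlb : ((m:ℝ) - 1) * ((j:ℝ) / 2) ≤ D := by rw [hD]; nlinarith
  have hD0 : 0 ≤ D := by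
    refine le_trans (mul_nonneg hM1 (by linarith : (0:ℝ) ≤ (j:ℝ)/2)) hDlb
  have hcast : ((m * (j - m) : ℕ) : ℝ) = (m:ℝ) * ((j:ℝ) - m) := by
    have hmj' : m ≤ j := by omega
    push_cast [Nat.cast_sub hmj']
    ring
  have hsplit : (1 - p) ^ (m * (j - m)) =
      (1 - p) ^ ((j:ℝ) - (g:ℝ) / 2) * (1 - p) ^ D := by
    rw [← Real.rpow_natCast (1-p) (m * (j-m)), hcast, ← Real.rpow_add hq0]
    congr 1
    rw [hD]; ring
  have hqexp : (1 - p) ≤ Real.exp (-p) := by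
    have := Real.add_one_le_exp (-p); linarith
  have hstep1 : (1 - p) ^ D ≤ Real.exp (-(4 * ((m:ℝ) - 1) * u)) := by
    calc (1 - p) ^ D ≤ (Real.exp (-p)) ^ D := Real.rpow_le_rpow hq0.le hqexp hD0
      _ = Real.exp (-p * D) := (Real.exp_mul (-p) D).symm
      _ ≤ Real.exp (-(4 * ((m:ℝ) - 1) * u)) := by
          apply Real.exp_le_exp.2
          rw [neg_mul, neg_le_neg_iff]
          have t1 : p * (((m:ℝ)-1) * ((j:ℝ)/2)) ≤ p * D :=
            mul_le_mul_of_nonneg_left hDlb hp.le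
          have t2 : p * (((m:ℝ)-1) * ((j:ℝ)/2)) = ((g:ℝ) * p) * (((m:ℝ)-1) * u / 2) := by
            rw [← huG]; ring
          have t3 : 8 * (((m:ℝ)-1) * u / 2) ≤ ((g:ℝ) * p) * (((m:ℝ)-1) * u / 2) := by
            apply mul_le_mul_of_nonneg_right hgp
            positivity
          calc 4 * ((m:ℝ) - 1) * u = 8 * (((m:ℝ)-1) * u / 2) := by ring
            _ ≤ ((g:ℝ) * p) * (((m:ℝ)-1) * u / 2) := t3
            _ = p * (((m:ℝ)-1) * ((j:ℝ)/2)) := t2.symm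
            _ ≤ p * D := t1
  have hchoose : (j.choose m : ℝ) ≤ (4 * Real.exp u) ^ m := by
    refine (choose_le_real j m (by omega)).trans ?_
    apply pow_le_pow_left₀ (by positivity)
    have hM0 : (0:ℝ) < m := by linarith
    have h1 : Real.exp 1 * j / m ≤ 4 * (Real.exp 1 * u) := by
      rw [div_le_iff₀ hM0]
      have key : Real.exp 1 * (u * g) ≤ Real.exp 1 * (u * (4 * m)) := by
        apply mul_le_mul_of_nonneg_left _ (Real.exp_pos 1).le
        apply mul_le_mul_of_nonneg_left hm4R hu0
      rw [huG] at key
      calc Real.exp 1 * j ≤ Real.exp 1 * (u * (4 * m)) := key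
        _ = 4 * (Real.exp 1 * u) * m := by ring
    refine h1.trans ?_
    have h3 : u ≤ Real.exp (u - 1) := by
      have := Real.add_one_le_exp (u - 1); linarith
    have h2 : Real.exp 1 * u ≤ Real.exp u := by
      calc Real.exp 1 * u ≤ Real.exp 1 * Real.exp (u-1) :=
            mul_le_mul_of_nonneg_left h3 (Real.exp_pos 1).le
        _ = Real.exp u := by rw [← Real.exp_add]; ring_nf
    linarith
  have hcomb : (4 * Real.exp u) ^ m * Real.exp (-(4 * ((m:ℝ) - 1) * u)) ≤
      Real.exp 4 * (1 / 5) ^ m := by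
    have e1 : (4 * Real.exp u) ^ m = 4 ^ m * Real.exp (u * m) := by
      rw [mul_pow, ← Real.exp_nat_mul]
      ring_nf
    rw [e1, mul_assoc, ← Real.exp_add]
    have e2 : u * m + -(4 * ((m:ℝ) - 1) * u) = u * (4 - 3 * m) := by ring
    rw [e2]
    have e3 : u * (4 - 3 * (m:ℝ)) ≤ 4 - 3 * m := by
      have h1 : 0 ≤ (u - 1) * (3 * (m:ℝ) - 4) :=
        mul_nonneg (by linarith) (by linarith)
      nlinarith
    have e4 : Real.exp (u * (4 - 3*(m:ℝ))) ≤ Real.exp 4 * Real.exp (-3) ^ m := by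
      rw [← Real.exp_nat_mul, ← Real.exp_add]
      apply Real.exp_le_exp.2
      have he : (4:ℝ) + (m:ℝ) * (-3) = 4 - 3 * (m:ℝ) := by ring
      rw [he]
      exact e3
    calc 4 ^ m * Real.exp (u * (4 - 3*(m:ℝ)))
        ≤ 4 ^ m * (Real.exp 4 * Real.exp (-3) ^ m) :=
          mul_le_mul_of_nonneg_left e4 (by positivity)
      _ = Real.exp 4 * (4 * Real.exp (-3)) ^ m := by rw [mul_pow]; ring
      _ ≤ Real.exp 4 * (1/5) ^ m := by
          apply mul_le_mul_of_nonneg_left _ (Real.exp_pos 4).le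
          apply pow_le_pow_left₀ (by positivity)
          have h20 : (20:ℝ) ≤ Real.exp 3 := exp_three_gt
          rw [Real.exp_neg, show (4:ℝ) * (Real.exp 3)⁻¹ = 4 / Real.exp 3 by ring,
            div_le_iff₀ (Real.exp_pos 3)]
          linarith
  calc (j.choose m : ℝ) * (1 - p) ^ (m * (j - m))
      = (j.choose m : ℝ) * ((1 - p) ^ ((j:ℝ) - (g:ℝ) / 2) * (1 - p) ^ D) := by rw [hsplit]
    _ ≤ (4 * Real.exp u) ^ m *
        ((1 - p) ^ ((j:ℝ) - (g:ℝ) / 2) * Real.exp (-(4 * ((m:ℝ) - 1) * u))) := by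
        apply mul_le_mul hchoose _ (by positivity) (by positivity)
        exact mul_le_mul_of_nonneg_left hstep1 (Real.rpow_nonneg hq0.le _)
    _ = (1 - p) ^ ((j:ℝ) - (g:ℝ) / 2) *
        ((4 * Real.exp u) ^ m * Real.exp (-(4 * ((m:ℝ) - 1) * u))) := by ring
    _ ≤ (1 - p) ^ ((j:ℝ) - (g:ℝ) / 2) * (Real.exp 4 * (1 / 5) ^ m) :=
        mul_le_mul_of_nonneg_left hcomb (Real.rpow_nonneg hq0.le _)

lemma win_term (j g m : ℕ) (p : ℝ) (hp : 0 < p) (hp1 : p < 1)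
    (hg0 : 0 < g) (hm1 : 1 ≤ m) (hg2m : g ≤ 2 * m) (h2mj : 2 * m ≤ j) :
    (j.choose m : ℝ) * (1 - p) ^ (m * (j - m)) ≤
      (2 * Real.exp 1 * j * (1 - p) ^ ((j:ℝ) / 2) / g) ^ m := by
  have hq0 : (0:ℝ) < 1 - p := by linarith
  have hq1 : (1:ℝ) - p ≤ 1 := by linarith
  have hmR : (1:ℝ) ≤ m := by exact_mod_cast hm1
  have hgR : (0:ℝ) < g := by exact_mod_cast hg0
  have hg2mR : (g:ℝ) ≤ 2 * m := by exact_mod_cast hg2m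
  have h2mjR : 2 * (m:ℝ) ≤ j := by exact_mod_cast h2mj
  have hrpow0 : (0:ℝ) ≤ (1 - p) ^ ((j:ℝ)/2) := Real.rpow_nonneg hq0.le _
  have hqm : (1 - p) ^ (m * (j - m)) ≤ ((1 - p) ^ ((j:ℝ)/2)) ^ m := by
    rw [mul_comm, pow_mul]
    apply pow_le_pow_left₀ (by positivity)
    rw [← Real.rpow_natCast (1-p) (j - m)]
    apply Real.rpow_le_rpow_of_exponent_ge hq0 hq1
    have : ((j - m : ℕ) : ℝ) = (j:ℝ) - m := by
      push_cast [Nat.cast_sub (by omega : m ≤ j)]; ring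
    rw [this]
    linarith
  have hch : (j.choose m : ℝ) ≤ (2 * Real.exp 1 * j / g) ^ m := by
    refine (choose_le_real j m hm1).trans ?_
    apply pow_le_pow_left₀ (by positivity)
    rw [div_le_div_iff₀ (by linarith : (0:ℝ) < m) hgR]
    have hj0 : (0:ℝ) ≤ j := by positivity
    nlinarith [Real.exp_pos 1, mul_nonneg (mul_nonneg (by positivity : (0:ℝ) ≤ Real.exp 1) hj0) (by linarith : (0:ℝ) ≤ 2*(m:ℝ) - g)]
  calc (j.choose m : ℝ) * (1 - p) ^ (m * (j - m))
      ≤ (2 * Real.exp 1 * j / g) ^ m * ((1 - p) ^ ((j:ℝ)/2)) ^ m := by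
        apply mul_le_mul hch hqm (by positivity) (by positivity)
    _ = (2 * Real.exp 1 * j * (1 - p) ^ ((j:ℝ) / 2) / g) ^ m := by
        rw [← mul_pow]
        congr 1
        ring

lemma exp_four_lt : Real.exp 4 ≤ 55 := by
  have h := Real.exp_one_lt_d9
  have h4 : Real.exp 4 = (Real.exp 1)^4 := by
    rw [← Real.exp_nat_mul]; norm_num
  rw [h4]
  have h2 : (Real.exp 1)^4 ≤ (2.7182818286:ℝ)^4 :=
    pow_le_pow_left₀ (Real.exp_pos 1).le h.le 4
  nlinarith [h2]

lemma geom_tail (j : ℕ) (hj : 3 ≤ j) :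
    ∑ m ∈ Finset.Icc 3 j, ((1:ℝ)/5) ^ m ≤ 1/100 := by
  have hIcc : Finset.Icc 3 j = Finset.Ico 3 (j+1) := by
    rw [Finset.Ico_add_one_right_eq_Icc]
  rw [hIcc]
  rw [geom_sum_Ico (by norm_num : ((1:ℝ)/5) ≠ 1) (by omega)]
  have h1 : ((1:ℝ)/5)^(j+1) ≥ 0 := by positivity
  have : (((1:ℝ)/5)^(j+1) - (1/5)^3) / ((1/5) - 1) =
      ((1/5)^3 - (1/5)^(j+1)) / (4/5) := by ring
  rw [this]
  rw [div_le_iff₀ (by norm_num : (0:ℝ) < 4/5)]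
  norm_num

lemma real_ineq (j g A : ℕ) (p : ℝ) (hp : 0 < p) (hp1 : p < 1) (hgp : 8 ≤ (g:ℝ) * p)
    (hgj : g ≤ j) (hA3 : 3 ≤ A) (hA4 : g ≤ 4 * A) :
    ∑ m ∈ (Finset.range (j+1)).filter (fun m => A ≤ m ∧ 2*m ≤ j),
        (j.choose m : ℝ) * (1-p)^(m*(j-m))
      ≤ (1-p) ^ ((j:ℝ) - g/2) +
        ∑ m ∈ (Finset.range (j+1)).filter (fun m => g ≤ 2*m ∧ 2*m ≤ j),
          (2 * Real.exp 1 * j * (1-p) ^ ((j:ℝ)/2) / g) ^ m := by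
  have hg9 : 9 ≤ g := g_ge_nine g p hp1 hp hgp
  have hq0 : (0:ℝ) < 1 - p := by linarith
  set Ms := (Finset.range (j+1)).filter (fun m => A ≤ m ∧ 2*m ≤ j) with hMs
  have hsplit := Finset.sum_filter_add_sum_filter_not Ms (fun m => g ≤ 2*m)
      (fun m => (j.choose m : ℝ) * (1-p)^(m*(j-m)))
  rw [← hsplit]
  have hwin : ∑ m ∈ Ms.filter (fun m => g ≤ 2*m),
      (j.choose m : ℝ) * (1-p)^(m*(j-m))
      ≤ ∑ m ∈ (Finset.range (j+1)).filter (fun m => g ≤ 2*m ∧ 2*m ≤ j),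
          (2 * Real.exp 1 * j * (1-p) ^ ((j:ℝ)/2) / g) ^ m := by
    have hsub : Ms.filter (fun m => g ≤ 2*m) ⊆
        (Finset.range (j+1)).filter (fun m => g ≤ 2*m ∧ 2*m ≤ j) := by
      intro m hm
      simp only [hMs, Finset.mem_filter, Finset.mem_range] at hm ⊢
      exact ⟨hm.1.1, hm.2, hm.1.2.2⟩
    calc ∑ m ∈ Ms.filter (fun m => g ≤ 2*m), (j.choose m : ℝ) * (1-p)^(m*(j-m))
        ≤ ∑ m ∈ Ms.filter (fun m => g ≤ 2*m),
            (2 * Real.exp 1 * j * (1-p) ^ ((j:ℝ)/2) / g) ^ m := by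
          apply Finset.sum_le_sum
          intro m hm
          simp only [hMs, Finset.mem_filter, Finset.mem_range] at hm
          exact win_term j g m p hp hp1 (by omega) (by omega) hm.2 hm.1.2.2
      _ ≤ _ := by
          apply Finset.sum_le_sum_of_subset_of_nonneg hsub
          intro m _ _
          positivity
  have hlow : ∑ m ∈ Ms.filter (fun m => ¬ g ≤ 2*m),
      (j.choose m : ℝ) * (1-p)^(m*(j-m)) ≤ (1-p) ^ ((j:ℝ) - g/2) := by
    have hRnn : (0:ℝ) ≤ (1-p) ^ ((j:ℝ) - g/2) := Real.rpow_nonneg hq0.le _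
    calc ∑ m ∈ Ms.filter (fun m => ¬ g ≤ 2*m), (j.choose m : ℝ) * (1-p)^(m*(j-m))
        ≤ ∑ m ∈ Ms.filter (fun m => ¬ g ≤ 2*m),
            (1-p) ^ ((j:ℝ) - g/2) * (Real.exp 4 * (1/5)^m) := by
          apply Finset.sum_le_sum
          intro m hm
          simp only [hMs, Finset.mem_filter, Finset.mem_range] at hm
          exact low_term j g m p hp hp1 hgp (by omega) (by omega) (by omega)
            hm.1.2.2 hgj
      _ = (1-p) ^ ((j:ℝ) - g/2) * Real.exp 4 *
            ∑ m ∈ Ms.filter (fun m => ¬ g ≤ 2*m), (1/5:ℝ)^m := by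
          rw [Finset.mul_sum]
          apply Finset.sum_congr rfl
          intro m _
          ring
      _ ≤ (1-p) ^ ((j:ℝ) - g/2) * Real.exp 4 * (1/100) := by
          apply mul_le_mul_of_nonneg_left _ (by positivity)
          calc ∑ m ∈ Ms.filter (fun m => ¬ g ≤ 2*m), (1/5:ℝ)^m
              ≤ ∑ m ∈ Finset.Icc 3 j, (1/5:ℝ)^m := by
                apply Finset.sum_le_sum_of_subset_of_nonneg
                · intro m hm
                  simp only [hMs, Finset.mem_filter, Finset.mem_range] at hm
                  rw [Finset.mem_Icc]
                  omega
                · intro m _ _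
                  positivity
            _ ≤ 1/100 := geom_tail j (by omega)
      _ ≤ (1-p) ^ ((j:ℝ) - g/2) := by
          have h55 : Real.exp 4 ≤ 55 := exp_four_lt
          have : (1-p) ^ ((j:ℝ) - g/2) * Real.exp 4 * (1/100)
              ≤ (1-p) ^ ((j:ℝ) - g/2) * 55 * (1/100) := by
            apply mul_le_mul_of_nonneg_right _ (by norm_num)
            exact mul_le_mul_of_nonneg_left h55 hRnn
          refine this.trans ?_
          nlinarith [hRnn]
  linarith

lemma bad_subset (j g C A : ℕ) (p : ℝ)
    (hA1 : 1 ≤ A) (hAj : A ≤ j) (hAC : 2 * A + C ≤ j + 1)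
    (hCreal : ∀ n : ℕ, ((n:ℝ) < (j:ℝ) - (g:ℝ)/2) → n ≤ C) :
    {ω : ErSpace j | ∀ c : (erGraph j p ω).ConnectedComponent,
        (c.supp.ncard : ℝ) < (j : ℝ) - (g:ℝ) / 2} ⊆
      ⋃ m ∈ (Finset.range (j+1)).filter (fun m => A ≤ m ∧ 2*m ≤ j),
        ⋃ S ∈ Finset.powersetCard m (Finset.univ : Finset (Fin j)), ncset j p S := by
  intro ω hω
  set G := erGraph j p ω with hG
  have hbadv : ∀ v : Fin j, (Finset.univ.filter
      (fun w => G.connectedComponentMk w = G.connectedComponentMk v)).card ≤ C := by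
    intro v
    have hc := hω (G.connectedComponentMk v)
    have heq : (G.connectedComponentMk v).supp.ncard = (Finset.univ.filter
        (fun w => G.connectedComponentMk w = G.connectedComponentMk v)).card := by
      rw [Set.ncard_eq_toFinset_card']
      congr 1
      ext w
      simp [SimpleGraph.ConnectedComponent.mem_supp_iff]
    rw [heq] at hc
    exact hCreal _ hc
  obtain ⟨S, hS1, hS2, hS3⟩ := covering G C A hA1 hAj hAC hbadv
  have hcard : S.card ≤ j := by
    have := Finset.card_le_univ S
    simpa using this
  simp only [Set.mem_iUnion, exists_prop]
  refine ⟨S.card, ?_, S, ?_, ?_⟩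
  · simp only [Finset.mem_filter, Finset.mem_range]
    exact ⟨by omega, hS1, hS2⟩
  · exact Finset.mem_powersetCard.2 ⟨Finset.subset_univ S, rfl⟩
  · intro i l hil hiff
    have hne : i ≠ l := ne_of_lt hil
    have hmin : min i l = i := min_eq_left hil.le
    have hmax : max i l = l := max_eq_right hil.le
    by_contra hle
    push_neg at hle
    by_cases hi : i ∈ S
    · have hl : l ∉ S := hiff.mp hi
      exact hS3 i hi l hl ⟨hne, by rw [hmin, hmax]; exact hle⟩
    · have hl : l ∈ S := by
        by_contra hl'
        exact hi (hiff.mpr hl')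
      have hmin' : min l i = i := min_eq_right hil.le
      have hmax' : max l i = l := max_eq_left hil.le
      exact hS3 l hl i hi ⟨hne.symm, by rw [hmin', hmax']; exact hle⟩

/-- For integers `j ≥ g ≥ 2` and `0 < p < 1` with `g·p ≥ 8`, the probability that
`G(j, p)` has no connected component on at least `j − g/2` vertices is at most
`(1−p)^{j−g/2} + Σ_{g/2 ≤ m ≤ j/2} (2e·j·(1−p)^{j/2}/g)^m`. -/
theorem stmt18 (j g : ℕ) (hg : 2 ≤ g) (hgj : g ≤ j) (p : ℝ) (hp : 0 < p) (hp1 : p < 1)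
    (hgp : 8 ≤ (g : ℝ) * p) :
    erMeasure j {ω | ∀ c : (erGraph j p ω).ConnectedComponent,
        (c.supp.ncard : ℝ) < (j : ℝ) - g / 2}
      ≤ ENNReal.ofReal ((1 - p) ^ ((j : ℝ) - g / 2) +
          ∑ m ∈ (Finset.range (j + 1)).filter (fun m => g ≤ 2 * m ∧ 2 * m ≤ j),
            (2 * Real.exp 1 * j * (1 - p) ^ ((j : ℝ) / 2) / g) ^ m) := by
  have hg9 : 9 ≤ g := g_ge_nine g p hp1 hp hgp
  set C : ℕ := (2 * j - g - 1) / 2 with hC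
  set A : ℕ := (j - C + 1) / 2 with hA
  have hA3 : 3 ≤ A := by omega
  have hA4 : g ≤ 4 * A := by omega
  have hA1 : 1 ≤ A := by omega
  have hAj : A ≤ j := by omega
  have hAC : 2 * A + C ≤ j + 1 := by omega
  have hCreal : ∀ n : ℕ, ((n:ℝ) < (j:ℝ) - (g:ℝ)/2) → n ≤ C := by
    intro n h
    have h2 : ((2*n + g : ℕ) : ℝ) < ((2*j : ℕ) : ℝ) := by push_cast; linarith
    have h3 : 2*n + g < 2*j := by exact_mod_cast h2
    omega
  have hincl := bad_subset j g C A p hA1 hAj hAC hCreal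
  set Ms := (Finset.range (j+1)).filter (fun m => A ≤ m ∧ 2*m ≤ j) with hMs
  have hq0 : (0:ℝ) < 1 - p := by linarith
  calc erMeasure j {ω | ∀ c : (erGraph j p ω).ConnectedComponent,
        (c.supp.ncard : ℝ) < (j : ℝ) - g / 2}
      ≤ erMeasure j (⋃ m ∈ Ms, ⋃ S ∈ Finset.powersetCard m (Finset.univ : Finset (Fin j)),
          ncset j p S) := measure_mono hincl
    _ ≤ ∑ m ∈ Ms, erMeasure j (⋃ S ∈ Finset.powersetCard m (Finset.univ : Finset (Fin j)),
          ncset j p S) := measure_biUnion_finset_le Ms _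
    _ ≤ ∑ m ∈ Ms, ∑ S ∈ Finset.powersetCard m (Finset.univ : Finset (Fin j)),
          erMeasure j (ncset j p S) := by
        apply Finset.sum_le_sum
        intro m _
        exact measure_biUnion_finset_le _ _
    _ ≤ ∑ m ∈ Ms, ∑ S ∈ Finset.powersetCard m (Finset.univ : Finset (Fin j)),
          ENNReal.ofReal ((1 - p) ^ (m * (j - m))) := by
        apply Finset.sum_le_sum
        intro m _
        apply Finset.sum_le_sum
        intro S hS
        have hScard : S.card = m := (Finset.mem_powersetCard.1 hS).2
        have := ncset_measure_le j hp.le hp1.le S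
        rw [hScard] at this
        exact this
    _ = ∑ m ∈ Ms, (j.choose m : ℝ≥0∞) * ENNReal.ofReal ((1 - p) ^ (m * (j - m))) := by
        apply Finset.sum_congr rfl
        intro m _
        rw [Finset.sum_const, Finset.card_powersetCard, Finset.card_univ, Fintype.card_fin,
          nsmul_eq_mul]
    _ = ENNReal.ofReal (∑ m ∈ Ms, (j.choose m : ℝ) * (1 - p) ^ (m * (j - m))) := by
        rw [ENNReal.ofReal_sum_of_nonneg]
        · apply Finset.sum_congr rfl
          intro m _
          rw [ENNReal.ofReal_mul (by positivity)]
          congr 1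
          simp [ENNReal.ofReal_natCast]
        · intro m _
          positivity
    _ ≤ ENNReal.ofReal ((1 - p) ^ ((j : ℝ) - g / 2) +
          ∑ m ∈ (Finset.range (j + 1)).filter (fun m => g ≤ 2 * m ∧ 2 * m ≤ j),
            (2 * Real.exp 1 * j * (1 - p) ^ ((j : ℝ) / 2) / g) ^ m) := by
        apply ENNReal.ofReal_le_ofReal
        exact real_ineq j g A p hp hp1 hgp hgj hA3 hA4
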